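/- Let F be the CDF of an MHR distribution with optimal monopoly revenue OPT_F = max_x x(1-F(x)) ≤ 1. Then any optimal reserve price P*_F (a maximizer of x(1-F(x))) satisfies P*_F ≤ e. -/

import Mathlib

/-- If F is an MHR CDF (its link h(x) = -log(1-F(x)) is convex,
non-decreasing, with h(0) = 0) and the optimal revenue is at most 1, then any
optimal reserve price is at most e. -/
theorem mhr_optimal_price_le_e
    (F : ℝ → ℝ)
    (hF0 : F 0 = 0)
    (h0le : ∀ x ∈ Set.Ici (0 : ℝ), 0 ≤ F x)
    (hlt : ∀ x ∈ Set.Ici (0 : ℝ), F x < 1)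
    (hconv : ConvexOn ℝ (Set.Ici 0) (fun x => -Real.log (1 - F x)))
    (hmono : MonotoneOn (fun x => -Real.log (1 - F x)) (Set.Ici 0))
    (P : ℝ) (hP : 0 ≤ P)
    (hopt : ∀ x ∈ Set.Ici (0 : ℝ), x * (1 - F x) ≤ P * (1 - F P))
    (hOPT : P * (1 - F P) ≤ 1) :
    P ≤ Real.exp 1 := by
  have hFP : 0 < 1 - F P := by have := hlt P hP; linarith
  set u : ℝ := -Real.log (1 - F P) with hu_def
  have hexp : Real.exp (-u) = 1 - F P := by
    rw [hu_def, neg_neg, Real.exp_log hFP]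
  by_cases hu : u ≤ 1
  · -- P * exp(-1) ≤ P * (1 - F P) ≤ 1, so P ≤ exp 1
    have h1 : Real.exp (-1) ≤ 1 - F P := by
      rw [← hexp]; exact Real.exp_le_exp.2 (by linarith)
    have h2 : P * Real.exp (-1) ≤ 1 := le_trans
      (mul_le_mul_of_nonneg_left h1 hP) hOPT
    have h3 : Real.exp (-1) * Real.exp 1 = 1 := by
      rw [← Real.exp_add]; norm_num
    nlinarith [Real.exp_pos (-1), Real.exp_pos 1]
  · -- u > 1: contradiction
    exfalso
    push_neg at hu
    have hPpos : 0 < P := by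
      rcases hP.lt_or_eq with h | h
      · exact h
      · exfalso
        have : u = 0 := by rw [hu_def, ← h, hF0]; simp
        linarith
    have hupos : (0:ℝ) < u := by linarith
    set x : ℝ := P / u with hx_def
    have hxpos : 0 < x := div_pos hPpos hupos
    -- convexity: h(x) ≤ 1
    have hh0 : -Real.log (1 - F 0) = 0 := by rw [hF0]; simp
    have ha : (0:ℝ) ≤ 1 - 1/u := by
      have : 1/u ≤ 1 := by rw [div_le_one hupos]; linarith
      linarith
    have hb : (0:ℝ) ≤ 1/u := by positivity
    have hab : (1 - 1/u) + 1/u = 1 := by ring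
    have hcvx := hconv.2 (Set.self_mem_Ici) (Set.mem_Ici.2 hP) ha hb hab
    have hcomb : (1 - 1/u) • (0:ℝ) + (1/u) • P = x := by
      rw [hx_def]; simp [smul_eq_mul]; ring
    rw [hcomb] at hcvx
    simp only [hh0] at hcvx
    have hhx : -Real.log (1 - F x) ≤ 1 := by
      have : (1 - 1/u) * 0 + (1/u) * u = 1 := by
        field_simp; ring
      calc -Real.log (1 - F x) ≤ (1 - 1/u) * 0 + (1/u) * u := by
            simpa [smul_eq_mul, hu_def] using hcvx
        _ = 1 := this
    have hFx : 0 < 1 - F x := by have := hlt x hxpos.le; linarith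
    have h1Fx : Real.exp (-1) ≤ 1 - F x := by
      rw [← Real.exp_log hFx]
      exact Real.exp_le_exp.2 (by linarith)
    -- optimality at x
    have hoptx := hopt x (Set.mem_Ici.2 hxpos.le)
    have hrev : x * Real.exp (-1) ≤ P * Real.exp (-u) := by
      rw [hexp]
      exact le_trans (mul_le_mul_of_nonneg_left h1Fx hxpos.le) hoptx
    -- so exp(-1)/u ≤ exp(-u), i.e. exp(u-1) ≤ u
    have hkey : Real.exp (u - 1) ≤ u := by
      have h5 : Real.exp (-1) ≤ u * Real.exp (-u) := by
        have := hrev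
        rw [hx_def] at this
        rw [div_mul_eq_mul_div, div_le_iff₀ hupos] at this
        nlinarith
      have h6 : Real.exp (u - 1) = Real.exp u * Real.exp (-1) := by
        rw [← Real.exp_add]; ring_nf
      have h7 : Real.exp u * Real.exp (-u) = 1 := by
        rw [← Real.exp_add]; simp
      nlinarith [Real.exp_pos u]
    have : u - 1 + 1 < Real.exp (u - 1) :=
      Real.add_one_lt_exp (by linarith)
    linarith
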